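/- Let p and r be primes with r dividing p − 1, and let A be a group of order r^k acting on a finite p-group P of order p^n via automorphisms. Let H be an A-invariant subgroup of P of order p^c. If n is not congruent to c modulo r, then there exists a nontrivial A-invariant cyclic subgroup U of P that is not contained in H. -/

import Mathlib

open Pointwise

theorem stmt_4 {A P : Type*} [Group A] [Finite A] [Group P] [Finite P]
    [MulDistribMulAction A P]
    (p r n k c : ℕ) (hp : p.Prime) (hr : r.Prime) (hrp : r ∣ p - 1)
    (hA : Nat.card A = r ^ k) (hP : Nat.card P = p ^ n)
    (H : Subgroup P) (hHcard : Nat.card H = p ^ c)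
    (hHinv : ∀ (a : A), ∀ x ∈ H, a • x ∈ H)
    (hnc : ¬ n ≡ c [MOD r]) :
    ∃ U : Subgroup P, U ≠ ⊥ ∧ IsCyclic U ∧ (∀ (a : A), ∀ x ∈ U, a • x ∈ U) ∧
      ¬ U ≤ H := by
  classical
  haveI : NeZero r := ⟨hr.pos.ne'⟩
  have hp2 : 2 ≤ p := hp.two_le
  have hpr : (p : ZMod r) = 1 := by
    have h1 : ((p - 1 : ℕ) : ZMod r) = 0 :=
      (ZMod.natCast_eq_zero_iff _ _).mpr hrp
    have hpe : p = (p - 1) + 1 := by omega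
    rw [hpe]; push_cast; rw [h1, zero_add]
  have hcn : c ≤ n := by
    have hd := Subgroup.card_subgroup_dvd_card H
    rw [hHcard, hP] at hd
    exact (Nat.pow_dvd_pow_iff_le_right hp.one_lt).mp hd
  haveI := Fintype.ofFinite P
  -- every zpowers subgroup is cyclic
  have cyc : ∀ x : P, IsCyclic ↥(Subgroup.zpowers x) := by
    intro x
    refine ⟨⟨⟨x, Subgroup.mem_zpowers x⟩, ?_⟩⟩
    rintro ⟨y, hy⟩
    obtain ⟨m, hm⟩ := Subgroup.mem_zpowers_iff.mp hy
    exact Subgroup.mem_zpowers_iff.mpr ⟨m, Subtype.ext (by simpa using hm)⟩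
  -- number of generators of a zpowers subgroup
  have gen_count : ∀ x : P,
      (Finset.univ.filter
        (fun y : P => Subgroup.zpowers y = Subgroup.zpowers x)).card
      = (Nat.card (Subgroup.zpowers x)).totient := by
    intro x
    set C := Subgroup.zpowers x with hC
    haveI : IsCyclic ↥C := cyc x
    have key : ∀ y : P, Subgroup.zpowers y = C ↔
        ∃ h : y ∈ C, orderOf (⟨y, h⟩ : ↥C) = Fintype.card ↥C := by
      intro y
      constructor
      · intro h
        have hyC : y ∈ C := h ▸ Subgroup.mem_zpowers y
        refine ⟨hyC, ?_⟩
        rw [Subgroup.orderOf_mk, ← Nat.card_zpowers, h, Nat.card_eq_fintype_card]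
      · rintro ⟨h, ho⟩
        have hle : Subgroup.zpowers y ≤ C := Subgroup.zpowers_le.mpr h
        refine Subgroup.eq_of_le_of_card_ge hle ?_
        have hcc : Nat.card ↥(Subgroup.zpowers y) = Nat.card ↥C := by
          rw [Nat.card_zpowers, ← Subgroup.orderOf_mk y h, ho,
            Nat.card_eq_fintype_card]
        exact hcc.ge
    rw [Nat.card_eq_fintype_card,
      ← IsCyclic.card_orderOf_eq_totient (α := ↥C) (d := Fintype.card ↥C) dvd_rfl]
    refine Finset.card_bij
      (fun y hy => ⟨y, ((key y).mp (Finset.mem_filter.mp hy).2).1⟩) ?_ ?_ ?_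
    · intro y hy
      simp only [Finset.mem_filter, Finset.mem_univ, true_and]
      exact ((key y).mp (Finset.mem_filter.mp hy).2).2
    · intro y1 h1 y2 h2 he
      exact congrArg Subtype.val he
    · rintro ⟨y, hyC⟩ hyt
      simp only [Finset.mem_filter, Finset.mem_univ, true_and] at hyt
      refine ⟨y, ?_, rfl⟩
      simp only [Finset.mem_filter, Finset.mem_univ, true_and]
      exact (key y).mpr ⟨hyC, hyt⟩
  -- the finset of elements outside H and of cyclic subgroups not in H
  set X : Finset P := Finset.univ.filter (fun x => x ∉ H) with hX
  set T : Finset (Subgroup P) := X.image (fun x => Subgroup.zpowers x) with hT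
  have hXcard : X.card = p ^ n - p ^ c := by
    have h1 : (Finset.univ.filter (fun x : P => x ∈ H)).card = p ^ c := by
      rw [← hHcard, Nat.card_eq_fintype_card, Fintype.card_subtype]
    have h2 := Finset.card_filter_add_card_filter_not
      (s := (Finset.univ : Finset P)) (p := fun x : P => x ∈ H)
    have h3 : (Finset.univ : Finset P).card = p ^ n := by
      rw [← hP, Nat.card_eq_fintype_card, Finset.card_univ]
    rw [hX]
    omega
  have hTmem : ∀ C ∈ T, ∃ x : P, x ∉ H ∧ Subgroup.zpowers x = C := by
    intro C hC
    obtain ⟨x, hxX, hxC⟩ := Finset.mem_image.mp hC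
    rw [hX] at hxX
    exact ⟨x, (Finset.mem_filter.mp hxX).2, hxC⟩
  have hTcardpow : ∀ C ∈ T, ∃ m : ℕ, 1 ≤ m ∧ Nat.card ↥C = p ^ m := by
    intro C hC
    obtain ⟨x, hxH, hxC⟩ := hTmem C hC
    have hd := Subgroup.card_subgroup_dvd_card C
    rw [hP] at hd
    obtain ⟨m, hmn, hm⟩ := (Nat.dvd_prime_pow hp).mp hd
    refine ⟨m, ?_, hm⟩
    by_contra h
    have hm0 : m = 0 := by omega
    rw [hm0, pow_zero] at hm
    have h1 : orderOf x = 1 := by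
      rw [← Nat.card_zpowers, hxC, hm]
    exact hxH ((orderOf_eq_one_iff.mp h1) ▸ H.one_mem)
  -- fiberwise counting
  have hsum : X.card = ∑ C ∈ T, (Nat.card ↥C).totient := by
    rw [Finset.card_eq_sum_card_fiberwise
      (f := fun x => Subgroup.zpowers x) (t := T)
      (fun x hx => Finset.mem_image_of_mem _ hx)]
    refine Finset.sum_congr rfl ?_
    intro C hC
    obtain ⟨x₀, hx₀H, hx₀C⟩ := hTmem C hC
    have hfib : X.filter (fun x => Subgroup.zpowers x = C)
        = Finset.univ.filter
          (fun y => Subgroup.zpowers y = Subgroup.zpowers x₀) := by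
      ext y
      simp only [Finset.mem_filter, Finset.mem_univ, true_and, hX, hx₀C]
      constructor
      · rintro ⟨_, h⟩; exact h
      · intro h
        refine ⟨?_, h⟩
        intro hyH
        have hCH : C ≤ H := h ▸ Subgroup.zpowers_le.mpr hyH
        exact hx₀H (hCH (hx₀C ▸ Subgroup.mem_zpowers x₀))
    rw [hfib, gen_count x₀, hx₀C]
  -- geometric series in ℕ
  have geo : ∀ m : ℕ, (∑ i ∈ Finset.range m, p ^ i) * (p - 1) = p ^ m - 1 := by
    intro m
    induction m with
    | zero => simp
    | succ m ih =>
      rw [Finset.sum_range_succ, add_mul, ih, pow_succ]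
      have h1 : 1 ≤ p ^ m := Nat.one_le_pow _ _ hp.pos
      have h2 : p ^ m * (p - 1) = p ^ m * p - p ^ m := by
        rw [Nat.mul_sub, mul_one]
      have h3 : p ^ m ≤ p ^ m * p := Nat.le_mul_of_pos_right _ hp.pos
      omega
  have hdivpow : ∀ m : ℕ, 1 ≤ m → p ^ m / p = p ^ (m - 1) := by
    intro m hm
    rw [← Nat.pow_div hm hp.pos, pow_one]
  -- the key equation in ℕ
  have main : (∑ C ∈ T, Nat.card ↥C / p) * (p - 1)
      = (p ^ c * ∑ i ∈ Finset.range (n - c), p ^ i) * (p - 1) := by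
    have lhs : (∑ C ∈ T, Nat.card ↥C / p) * (p - 1)
        = ∑ C ∈ T, (Nat.card ↥C).totient := by
      rw [Finset.sum_mul]
      refine Finset.sum_congr rfl ?_
      intro C hC
      obtain ⟨m, hm1, hm⟩ := hTcardpow C hC
      rw [hm, Nat.totient_prime_pow hp hm1, hdivpow m hm1]
    have rhs : (p ^ c * ∑ i ∈ Finset.range (n - c), p ^ i) * (p - 1)
        = p ^ n - p ^ c := by
      rw [mul_assoc, geo (n - c), Nat.mul_sub, mul_one, ← pow_add,
        show c + (n - c) = n from by omega]
    rw [lhs, ← hsum, hXcard, rhs]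
  have pm1pos : 0 < p - 1 := by omega
  have hcancel : ∑ C ∈ T, Nat.card ↥C / p
      = p ^ c * ∑ i ∈ Finset.range (n - c), p ^ i :=
    Nat.eq_of_mul_eq_mul_right pm1pos main
  -- cast to ZMod r
  have hL1 : ∀ C ∈ T, ((Nat.card ↥C / p : ℕ) : ZMod r) = 1 := by
    intro C hC
    obtain ⟨m, hm1, hm⟩ := hTcardpow C hC
    rw [hm, hdivpow m hm1, Nat.cast_pow, hpr, one_pow]
  have hTcast : ((T.card : ℕ) : ZMod r) = ((n - c : ℕ) : ZMod r) := by
    have h := congrArg (Nat.cast : ℕ → ZMod r) hcancel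
    push_cast at h
    rw [Finset.sum_congr rfl hL1, Finset.sum_const, nsmul_eq_mul, mul_one,
      hpr, one_pow, one_mul] at h
    rw [h]
    simp
  have hTne : ((T.card : ℕ) : ZMod r) ≠ 0 := by
    rw [hTcast]
    intro h0
    have hdvd : r ∣ n - c := (ZMod.natCast_eq_zero_iff _ _).mp h0
    exact hnc ((Nat.modEq_iff_dvd' hcn).mpr hdvd).symm
  -- the action of A on T
  have hsmul_zpowers : ∀ (a : A) (x : P),
      a • Subgroup.zpowers x = Subgroup.zpowers (a • x) := by
    intro a x
    rw [Subgroup.pointwise_smul_def]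
    exact MonoidHom.map_zpowers (MulDistribMulAction.toMonoidEnd A P a : P →* P) x
  have hTinv : ∀ (a : A), ∀ C ∈ T, a • C ∈ T := by
    intro a C hC
    obtain ⟨x, hxH, hxC⟩ := hTmem C hC
    rw [← hxC, hsmul_zpowers]
    refine Finset.mem_image_of_mem _ ?_
    rw [hX, Finset.mem_filter]
    refine ⟨Finset.mem_univ _, ?_⟩
    intro hmem
    have : a⁻¹ • (a • x) ∈ H := hHinv a⁻¹ _ hmem
    rw [inv_smul_smul] at this
    exact hxH this
  haveI : Finite (Subgroup P) :=
    Finite.of_injective (fun K : Subgroup P => (K : Set P)) SetLike.coe_injective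
  let S : SubMulAction A (Subgroup P) :=
    ⟨(↑T : Set (Subgroup P)), fun {a C} hC => hTinv a C (Finset.mem_coe.mp hC)⟩
  have hScard : Nat.card ↥S = T.card := by
    rw [← Nat.card_eq_finsetCard]
    exact Nat.card_congr (Equiv.subtypeEquivRight (fun C => Iff.rfl))
  haveI : Fact r.Prime := ⟨hr⟩
  have hmod := (IsPGroup.of_card hA).card_modEq_card_fixedPoints (α := ↥S)
  have hfixne : Nat.card (MulAction.fixedPoints A ↥S) ≠ 0 := by
    intro h0
    rw [h0, hScard] at hmod
    exact hTne ((ZMod.natCast_eq_zero_iff _ _).mpr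
      (Nat.modEq_zero_iff_dvd.mp hmod))
  have hfixnonempty : Nonempty (MulAction.fixedPoints A ↥S) :=
    (Nat.card_ne_zero.mp hfixne).1
  obtain ⟨⟨⟨C, hCS⟩, hCfix⟩⟩ := hfixnonempty
  have hCT : C ∈ T := Finset.mem_coe.mp hCS
  have hfix' : ∀ a : A, a • C = C := by
    intro a
    have := hCfix a
    exact congrArg Subtype.val this
  obtain ⟨x₀, hx₀H, hx₀C⟩ := hTmem C hCT
  refine ⟨C, ?_, ?_, ?_, ?_⟩
  · intro hbot
    have : x₀ ∈ C := hx₀C ▸ Subgroup.mem_zpowers x₀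
    rw [hbot, Subgroup.mem_bot] at this
    exact hx₀H (this ▸ H.one_mem)
  · rw [← hx₀C]; exact cyc x₀
  · intro a x hx
    have : a • x ∈ a • C := Subgroup.smul_mem_pointwise_smul x a C hx
    rwa [hfix' a] at this
  · intro hle
    exact hx₀H (hle (hx₀C ▸ Subgroup.mem_zpowers x₀))
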